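/- Let x₁,…,x_m ∈ ℝᵈ and suppose that for some set S ⊆ {1,…,d} with |S| = s ≥ 1 and some constant K ≥ 0 we have (1/m)∑ᵢ (xᵢᵀβ)² ≤ K for all β in C(S,3) ∩ {‖β‖₂ = 1}, where C(S,3) = {v : ‖v_{Sᶜ}‖₁ ≤ 3‖v_S‖₁}. Then for every Δ ∈ ℝᵈ, (1/m)∑ᵢ (xᵢᵀΔ)² ≤ 2K·(3‖Δ‖₁²/s + 2‖Δ‖₂²). -/

import Mathlib

theorem stmt9 {d m : ℕ} (x : Fin m → Fin d → ℝ) (S : Finset (Fin d)) (s : ℕ)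
    (hcard : S.card = s) (hs : 1 ≤ s) (K : ℝ) (hK : 0 ≤ K)
    (h : ∀ β : Fin d → ℝ,
      (∑ j ∈ Sᶜ, |β j|) ≤ 3 * ∑ j ∈ S, |β j| →
      Real.sqrt (∑ j, (β j) ^ 2) = 1 →
      (1 / (m : ℝ)) * ∑ i, (∑ j, x i j * β j) ^ 2 ≤ K) :
    ∀ Δ : Fin d → ℝ,
      (1 / (m : ℝ)) * ∑ i, (∑ j, x i j * Δ j) ^ 2 ≤
        2 * K * (3 * (∑ j, |Δ j|) ^ 2 / s + 2 * ∑ j, (Δ j) ^ 2) := by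
  intro Δ
  set Q : (Fin d → ℝ) → ℝ := fun β => (1 / (m : ℝ)) * ∑ i, (∑ j, x i j * β j) ^ 2 with hQdef
  have hQ0 : ∀ β, 0 ≤ Q β := by
    intro β
    apply mul_nonneg (by positivity)
    exact Finset.sum_nonneg fun i _ => sq_nonneg _
  -- homogenized version of h
  have hhom : ∀ β : Fin d → ℝ, (∑ j ∈ Sᶜ, |β j|) ≤ 3 * ∑ j ∈ S, |β j| →
      Q β ≤ K * ∑ j, (β j) ^ 2 := by
    intro β hcone
    by_cases hz : (∑ j, (β j) ^ 2) = 0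
    · have hb : ∀ j, β j = 0 := by
        intro j
        have := (Finset.sum_eq_zero_iff_of_nonneg (fun j _ => sq_nonneg (β j))).mp hz j
          (Finset.mem_univ j)
        exact pow_eq_zero_iff (by norm_num) |>.mp this
      have : Q β = 0 := by
        simp only [hQdef]
        simp [hb]
      rw [this, hz, mul_zero]
    · have hsum_pos : 0 < ∑ j, (β j) ^ 2 :=
        lt_of_le_of_ne (Finset.sum_nonneg fun j _ => sq_nonneg _) (Ne.symm hz)
      set c : ℝ := Real.sqrt (∑ j, (β j) ^ 2) with hc
      have hcpos : 0 < c := Real.sqrt_pos.mpr hsum_pos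
      have hc2 : c ^ 2 = ∑ j, (β j) ^ 2 := Real.sq_sqrt hsum_pos.le
      have key := h (fun j => β j / c) ?_ ?_
      · -- Q (β/c) = Q β / c^2
        have hterm : ∀ i, (∑ j, x i j * (β j / c)) ^ 2 = (∑ j, x i j * β j) ^ 2 / c ^ 2 := by
          intro i
          have hh : (∑ j, x i j * (β j / c)) = (∑ j, x i j * β j) / c := by
            rw [Finset.sum_div]
            apply Finset.sum_congr rfl
            intro j _; ring
          rw [hh, div_pow]
        have key2 : Q (fun j => β j / c) ≤ K := key
        have hQscale : Q (fun j => β j / c) = Q β / c ^ 2 := by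
          simp only [hQdef, hterm, ← Finset.sum_div]
          ring
        rw [hQscale] at key2
        calc Q β = Q β / c ^ 2 * c ^ 2 := by field_simp
          _ ≤ K * c ^ 2 := by
              apply mul_le_mul_of_nonneg_right key2 (sq_nonneg c)
          _ = K * ∑ j, (β j) ^ 2 := by rw [hc2]
      · -- cone condition scales
        have h1 : ∀ j, |β j / c| = |β j| / c := by
          intro j; rw [abs_div, abs_of_pos hcpos]
        simp only [h1, ← Finset.sum_div]
        rw [div_le_iff₀ hcpos]
        calc (∑ j ∈ Sᶜ, |β j|) ≤ 3 * ∑ j ∈ S, |β j| := hcone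
          _ = 3 * ((∑ j ∈ S, |β j|) / c) * c := by field_simp
      · -- norm = 1
        have : (∑ j, (β j / c) ^ 2) = (∑ j, (β j) ^ 2) / c ^ 2 := by
          simp only [div_pow]
          rw [← Finset.sum_div]
        rw [this, ← hc2, div_self (by positivity)]
        exact Real.sqrt_one
  -- definitions
  set L : ℝ := ∑ j, |Δ j| with hL
  have hL0 : 0 ≤ L := Finset.sum_nonneg fun j _ => abs_nonneg _
  have hspos : (0:ℝ) < s := by exact_mod_cast hs
  set T : Fin d → ℝ := fun j => if j ∈ S then L / s else 0 with hT
  -- cone for T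
  have hconeT : (∑ j ∈ Sᶜ, |T j|) ≤ 3 * ∑ j ∈ S, |T j| := by
    have h1 : (∑ j ∈ Sᶜ, |T j|) = 0 := by
      apply Finset.sum_eq_zero
      intro j hj
      simp only [hT]
      rw [if_neg (Finset.mem_compl.mp hj)]
      exact abs_zero
    rw [h1]
    positivity
  -- L = ∑_S |Δ| + ∑_Sᶜ |Δ|
  have hLsplit : L = (∑ j ∈ S, |Δ j|) + ∑ j ∈ Sᶜ, |Δ j| := by
    rw [hL, ← Finset.sum_add_sum_compl S fun j => |Δ j|]
  -- cone for Δ - T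
  have hconeD : (∑ j ∈ Sᶜ, |Δ j - T j|) ≤ 3 * ∑ j ∈ S, |Δ j - T j| := by
    have h1 : (∑ j ∈ Sᶜ, |Δ j - T j|) = ∑ j ∈ Sᶜ, |Δ j| := by
      apply Finset.sum_congr rfl
      intro j hj
      simp only [hT]
      rw [if_neg (Finset.mem_compl.mp hj), sub_zero]
    have h2 : (∑ j ∈ Sᶜ, |Δ j|) ≤ ∑ j ∈ S, |Δ j - T j| := by
      have h3 : ∀ j ∈ S, L / s - |Δ j| ≤ |Δ j - T j| := by
        intro j hj
        simp only [hT, if_pos hj]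
        have habs : |L / (s:ℝ)| = L / s := abs_of_nonneg (by positivity)
        calc L / s - |Δ j| = |L / s| - |Δ j| := by rw [habs]
          _ ≤ |L / s - Δ j| := abs_sub_abs_le_abs_sub _ _
          _ = |Δ j - L / s| := abs_sub_comm _ _
      calc (∑ j ∈ Sᶜ, |Δ j|) = L - ∑ j ∈ S, |Δ j| := by rw [hLsplit]; ring
        _ = ∑ j ∈ S, (L / s - |Δ j|) := by
            rw [Finset.sum_sub_distrib, Finset.sum_const, hcard, nsmul_eq_mul]
            field_simp
        _ ≤ ∑ j ∈ S, |Δ j - T j| := Finset.sum_le_sum h3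
    rw [h1]
    calc (∑ j ∈ Sᶜ, |Δ j|) ≤ ∑ j ∈ S, |Δ j - T j| := h2
      _ ≤ 3 * ∑ j ∈ S, |Δ j - T j| := by
          nlinarith [Finset.sum_nonneg (fun j (_ : j ∈ S) => abs_nonneg (Δ j - T j))]
  -- ∑ T² = L²/s
  have hT2 : (∑ j, (T j) ^ 2) = L ^ 2 / s := by
    rw [← Finset.sum_add_sum_compl S fun j => (T j)^2]
    have h1 : (∑ j ∈ S, (T j)^2) = ∑ j ∈ S, (L/s)^2 := by
      apply Finset.sum_congr rfl; intro j hj; simp only [hT, if_pos hj]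
    have h2 : (∑ j ∈ Sᶜ, (T j)^2) = 0 := by
      apply Finset.sum_eq_zero; intro j hj
      simp only [hT]; rw [if_neg (Finset.mem_compl.mp hj)]; ring
    rw [h1, h2, Finset.sum_const, hcard, nsmul_eq_mul]
    field_simp
    ring
  -- Q Δ ≤ 2 Q T + 2 Q (Δ - T)
  have hsplit : Q Δ ≤ 2 * Q T + 2 * Q (fun j => Δ j - T j) := by
    have hpt : ∀ i, (∑ j, x i j * Δ j) ^ 2 ≤
        2 * (∑ j, x i j * T j) ^ 2 + 2 * (∑ j, x i j * (Δ j - T j)) ^ 2 := by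
      intro i
      have hdec : (∑ j, x i j * Δ j) =
          (∑ j, x i j * T j) + ∑ j, x i j * (Δ j - T j) := by
        rw [← Finset.sum_add_distrib]
        apply Finset.sum_congr rfl
        intro j _; ring
      rw [hdec]
      nlinarith [sq_nonneg ((∑ j, x i j * T j) - ∑ j, x i j * (Δ j - T j))]
    have hsum : (∑ i, (∑ j, x i j * Δ j) ^ 2) ≤
        ∑ i, (2 * (∑ j, x i j * T j) ^ 2 + 2 * (∑ j, x i j * (Δ j - T j)) ^ 2) :=
      Finset.sum_le_sum fun i _ => hpt i
    simp only [hQdef]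
    calc (1 / (m:ℝ)) * ∑ i, (∑ j, x i j * Δ j) ^ 2
        ≤ (1 / (m:ℝ)) * ∑ i, (2 * (∑ j, x i j * T j) ^ 2 +
            2 * (∑ j, x i j * (Δ j - T j)) ^ 2) :=
          mul_le_mul_of_nonneg_left hsum (by positivity)
      _ = 2 * ((1 / (m:ℝ)) * ∑ i, (∑ j, x i j * T j) ^ 2) +
          2 * ((1 / (m:ℝ)) * ∑ i, (∑ j, x i j * (Δ j - T j)) ^ 2) := by
          rw [Finset.sum_add_distrib, ← Finset.mul_sum, ← Finset.mul_sum]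
          ring
  have hQT := hhom T hconeT
  have hQD := hhom (fun j => Δ j - T j) hconeD
  -- ∑ (Δ - T)² ≤ 2 ∑ Δ² + 2 ∑ T²
  have hDT2 : (∑ j, (Δ j - T j) ^ 2) ≤ 2 * (∑ j, (Δ j)^2) + 2 * ∑ j, (T j)^2 := by
    rw [Finset.mul_sum, Finset.mul_sum, ← Finset.sum_add_distrib]
    apply Finset.sum_le_sum
    intro j _
    nlinarith [sq_nonneg (Δ j + T j)]
  have hfinal : Q Δ ≤ 2 * K * ((∑ j, (T j)^2) + (2 * (∑ j, (Δ j)^2) + 2 * ∑ j, (T j)^2)) := by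
    calc Q Δ ≤ 2 * Q T + 2 * Q (fun j => Δ j - T j) := hsplit
      _ ≤ 2 * (K * ∑ j, (T j)^2) + 2 * (K * ∑ j, (Δ j - T j)^2) := by
          apply add_le_add <;> apply mul_le_mul_of_nonneg_left _ (by norm_num)
          · exact hQT
          · exact hQD
      _ ≤ 2 * (K * ∑ j, (T j)^2) +
          2 * (K * (2 * (∑ j, (Δ j)^2) + 2 * ∑ j, (T j)^2)) := by
          apply add_le_add_right
          apply mul_le_mul_of_nonneg_left _ (by norm_num)
          exact mul_le_mul_of_nonneg_left hDT2 hK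
      _ = 2 * K * ((∑ j, (T j)^2) + (2 * (∑ j, (Δ j)^2) + 2 * ∑ j, (T j)^2)) := by ring
  calc (1 / (m : ℝ)) * ∑ i, (∑ j, x i j * Δ j) ^ 2 = Q Δ := rfl
    _ ≤ 2 * K * ((∑ j, (T j)^2) + (2 * (∑ j, (Δ j)^2) + 2 * ∑ j, (T j)^2)) := hfinal
    _ = 2 * K * (3 * L ^ 2 / s + 2 * ∑ j, (Δ j)^2) := by
        rw [hT2]; ring
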